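/- Let U and V be nonnegative random variables defined on the same probability space, and suppose that for every q ∈ [0,1] the random variable q·U + (1−q)·V has the same distribution as U (equivalently, its law does not depend on q). Then U = V almost surely. -/

import Mathlib

open MeasureTheory

/-- If `U, V ≥ 0` are random variables on the same probability space and for every
`q ∈ [0,1]` the random variable `q·U + (1−q)·V` has the same law as `U`, then
`U = V` almost surely. -/
theorem stmt_7 {Ω : Type*} [MeasurableSpace Ω] (P : Measure Ω) [IsProbabilityMeasure P]
    (U V : Ω → ℝ) (hU : Measurable U) (hV : Measurable V)
    (hU0 : ∀ ω, 0 ≤ U ω) (hV0 : ∀ ω, 0 ≤ V ω)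
    (hlaw : ∀ q : ℝ, q ∈ Set.Icc (0 : ℝ) 1 →
      Measure.map (fun ω => q * U ω + (1 - q) * V ω) P = Measure.map U P) :
    ∀ᵐ ω ∂P, U ω = V ω := by
  have hfm : Measurable fun x : ℝ => Real.exp (-x) := measurable_id.neg.exp
  -- equal laws give equal Laplace transforms at 1
  have key : ∀ (W : Ω → ℝ), Measurable W → Measure.map W P = Measure.map U P →
      ∫ ω, Real.exp (-W ω) ∂P = ∫ ω, Real.exp (-U ω) ∂P := by
    intro W hW hmap
    rw [← integral_map hW.aemeasurable hfm.aestronglyMeasurable, hmap,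
      integral_map hU.aemeasurable hfm.aestronglyMeasurable]
  have hVeq : ∫ ω, Real.exp (-V ω) ∂P = ∫ ω, Real.exp (-U ω) ∂P := by
    have h0 := hlaw 0 (by norm_num)
    have he : (fun ω => (0 : ℝ) * U ω + (1 - 0) * V ω) = V := by funext ω; ring
    rw [he] at h0
    exact key V hV h0
  have hMeq : ∫ ω, Real.exp (-((U ω + V ω) / 2)) ∂P = ∫ ω, Real.exp (-U ω) ∂P := by
    have h := hlaw (1 / 2) (by norm_num)
    have he : (fun ω => (1 / 2 : ℝ) * U ω + (1 - 1 / 2) * V ω)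
        = fun ω => (U ω + V ω) / 2 := by funext ω; ring
    rw [he] at h
    exact key _ ((hU.add hV).div_const 2) h
  -- integrability of bounded exponentials
  have hint : ∀ (W : Ω → ℝ), Measurable W → (∀ ω, 0 ≤ W ω) →
      Integrable (fun ω => Real.exp (-W ω)) P := by
    intro W hW hW0
    refine Integrable.mono' (integrable_const 1) hW.neg.exp.aestronglyMeasurable
      (ae_of_all _ fun ω => ?_)
    rw [Real.norm_eq_abs, abs_of_pos (Real.exp_pos _)]
    calc Real.exp (-W ω) ≤ Real.exp 0 := Real.exp_le_exp.mpr (by linarith [hW0 ω])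
      _ = 1 := Real.exp_zero
  have hiU := hint U hU hU0
  have hiV := hint V hV hV0
  have hiM := hint (fun ω => (U ω + V ω) / 2) ((hU.add hV).div_const 2) (fun ω => by
    have := hU0 ω; have := hV0 ω; show 0 ≤ (U ω + V ω) / 2; positivity)
  -- the nonnegative gap function
  set g : Ω → ℝ := fun ω =>
    (Real.exp (-U ω) + Real.exp (-V ω)) / 2 - Real.exp (-((U ω + V ω) / 2)) with hg
  have hsq : ∀ ω, Real.exp (-U ω) = Real.exp (-(U ω) / 2) ^ 2 ∧
      Real.exp (-V ω) = Real.exp (-(V ω) / 2) ^ 2 ∧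
      Real.exp (-((U ω + V ω) / 2)) = Real.exp (-(U ω) / 2) * Real.exp (-(V ω) / 2) := by
    intro ω
    refine ⟨?_, ?_, ?_⟩
    · rw [sq, ← Real.exp_add]; congr 1; ring
    · rw [sq, ← Real.exp_add]; congr 1; ring
    · rw [← Real.exp_add]; congr 1; ring
  have hg0 : ∀ ω, 0 ≤ g ω := by
    intro ω
    obtain ⟨h1, h2, h3⟩ := hsq ω
    simp only [hg]
    rw [h1, h2, h3]
    nlinarith [sq_nonneg (Real.exp (-(U ω) / 2) - Real.exp (-(V ω) / 2))]
  have hiS : Integrable (fun ω => (Real.exp (-U ω) + Real.exp (-V ω)) / 2) P :=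
    (hiU.add hiV).div_const 2
  have hig : Integrable g P := hiS.sub hiM
  have hintg : ∫ ω, g ω ∂P = 0 := by
    simp only [hg]
    rw [integral_sub hiS hiM, integral_div, integral_add hiU hiV, hVeq, hMeq]
    ring
  have hgz : g =ᵐ[P] 0 := (integral_eq_zero_iff_of_nonneg hg0 hig).mp hintg
  filter_upwards [hgz] with ω hω
  obtain ⟨h1, h2, h3⟩ := hsq ω
  have hω' : (Real.exp (-U ω) + Real.exp (-V ω)) / 2
      - Real.exp (-((U ω + V ω) / 2)) = 0 := hω
  rw [h1, h2, h3] at hω'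
  have hab : Real.exp (-(U ω) / 2) = Real.exp (-(V ω) / 2) := by
    nlinarith [sq_nonneg (Real.exp (-(U ω) / 2) - Real.exp (-(V ω) / 2))]
  have := Real.exp_injective hab
  linarith
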